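/- arXiv:1706.04180 — 2 statements merged into one kernel-verified Lean document; each statement's English description precedes it below -/
import Mathlib

section
/- The function f(E, B) = Eᵀ(I + 2B)⁻¹E, defined on pairs (E, B) with E ∈ ℝ^d and B a d×d symmetric matrix with I + 2B positive definite, is jointly convex in (E, B). -/
open Matrix

lemma posSemidef_smul_aux {d : ℕ} {a : ℝ} (ha : 0 ≤ a)
    {A : Matrix (Fin d) (Fin d) ℝ} (hA : A.PosSemidef) : (a • A).PosSemidef := by
  refine ⟨by simpa [Matrix.IsHermitian] using congrArg (a • ·) hA.1, fun x => ?_⟩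
  have := hA.2 x
  simpa [Finsupp.mul_sum, mul_assoc, mul_left_comm] using mul_nonneg ha this

lemma posDef_add_smul_aux {d : ℕ} {a b : ℝ} (ha : 0 ≤ a) (hb : 0 ≤ b)
    (hab : a + b = 1) {A B : Matrix (Fin d) (Fin d) ℝ}
    (hA : A.PosDef) (hB : B.PosDef) : (a • A + b • B).PosDef := by
  rcases eq_or_lt_of_le ha with h | h
  · have hb1 : b = 1 := by linarith
    simpa [← h, hb1] using hB
  · have hsA : (a • A).PosDef := by
      refine ⟨by simpa [Matrix.IsHermitian] using congrArg (a • ·) hA.1, fun x hx => ?_⟩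
      have := hA.2 hx
      simpa [Finsupp.mul_sum, mul_assoc, mul_left_comm] using mul_pos h this
    exact hsA.add_posSemidef (posSemidef_smul_aux hb hB.posSemidef)

/-- Key inequality: for posdef `A`, `2 E·Z − Zᵀ A Z ≤ Eᵀ A⁻¹ E`. -/
lemma key_ineq {d : ℕ} {A : Matrix (Fin d) (Fin d) ℝ} (hA : A.PosDef)
    (E Z : Fin d → ℝ) :
    2 * (E ⬝ᵥ Z) - Z ⬝ᵥ A.mulVec Z ≤ E ⬝ᵥ A⁻¹.mulVec E := by
  set v := A⁻¹.mulVec E with hv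
  have hAv : A.mulVec v = E := by
    rw [hv, mulVec_mulVec, Matrix.mul_nonsing_inv _ (isUnit_iff_ne_zero.mpr hA.det_pos.ne'), one_mulVec]
  have hsymm : Aᵀ = A := hA.isHermitian
  have hvAZ : v ⬝ᵥ A.mulVec Z = E ⬝ᵥ Z := by
    rw [dotProduct_mulVec, ← hAv]
    congr 1
    rw [← mulVec_transpose, hsymm]
  have hW : 0 ≤ (Z - v) ⬝ᵥ A.mulVec (Z - v) := by
    have := hA.posSemidef.dotProduct_mulVec_nonneg (Z - v)
    simpa using this
  have hexp : (Z - v) ⬝ᵥ A.mulVec (Z - v)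
      = Z ⬝ᵥ A.mulVec Z - 2 * (E ⬝ᵥ Z) + E ⬝ᵥ A⁻¹.mulVec E := by
    rw [mulVec_sub, dotProduct_sub, sub_dotProduct, sub_dotProduct, hAv, hvAZ]
    have h1 : v ⬝ᵥ E = E ⬝ᵥ A⁻¹.mulVec E := by rw [hv, dotProduct_comm]
    have h2 : Z ⬝ᵥ E = E ⬝ᵥ Z := dotProduct_comm _ _
    rw [h1, h2]; ring
  linarith [hexp ▸ hW]

/-- Equality case: `Eᵀ A⁻¹ E = 2 E·v − vᵀ A v` for `v = A⁻¹ E`. -/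
lemma key_eq {d : ℕ} {A : Matrix (Fin d) (Fin d) ℝ} (hA : A.PosDef)
    (E : Fin d → ℝ) :
    E ⬝ᵥ A⁻¹.mulVec E
      = 2 * (E ⬝ᵥ A⁻¹.mulVec E) - (A⁻¹.mulVec E) ⬝ᵥ A.mulVec (A⁻¹.mulVec E) := by
  have hAv : A.mulVec (A⁻¹.mulVec E) = E := by
    rw [mulVec_mulVec, Matrix.mul_nonsing_inv _ (isUnit_iff_ne_zero.mpr hA.det_pos.ne'), one_mulVec]
  rw [hAv, dotProduct_comm (A⁻¹.mulVec E) E]; ring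

/-- The function `(E,B) ↦ Eᵀ(I+2B)⁻¹E` is jointly convex on the set of pairs where `B` is
symmetric and `I + 2B` is positive definite. -/
theorem convexOn_quadratic_inv
    (d : ℕ) :
    ConvexOn ℝ
      {p : (Fin d → ℝ) × Matrix (Fin d) (Fin d) ℝ |
        p.2.IsSymm ∧ ((1 : Matrix (Fin d) (Fin d) ℝ) + 2 • p.2).PosDef}
      (fun p => p.1 ⬝ᵥ ((1 : Matrix (Fin d) (Fin d) ℝ) + 2 • p.2)⁻¹.mulVec p.1) := by
  have hmat : ∀ (a b : ℝ), a + b = 1 → ∀ B₁ B₂ : Matrix (Fin d) (Fin d) ℝ,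
      (1 : Matrix (Fin d) (Fin d) ℝ) + 2 • (a • B₁ + b • B₂)
        = a • ((1 : Matrix (Fin d) (Fin d) ℝ) + 2 • B₁)
          + b • ((1 : Matrix (Fin d) (Fin d) ℝ) + 2 • B₂) := by
    intro a b hab B₁ B₂
    ext i j
    simp only [Matrix.add_apply, Matrix.smul_apply, Matrix.one_apply, smul_eq_mul]
    by_cases h : i = j <;> simp [h] <;> ring_nf <;> nlinarith [hab]
  constructor
  · -- convexity of the set
    rintro ⟨E₁, B₁⟩ ⟨h₁s, h₁p⟩ ⟨E₂, B₂⟩ ⟨h₂s, h₂p⟩ a b ha hb hab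
    refine ⟨?_, ?_⟩
    · show (a • B₁ + b • B₂).IsSymm
      unfold Matrix.IsSymm at *
      simp [transpose_add, transpose_smul, h₁s, h₂s]
    · show ((1 : Matrix (Fin d) (Fin d) ℝ) + 2 • (a • B₁ + b • B₂)).PosDef
      rw [hmat a b hab]
      exact posDef_add_smul_aux ha hb hab h₁p h₂p
  · rintro ⟨E₁, B₁⟩ ⟨h₁s, h₁p⟩ ⟨E₂, B₂⟩ ⟨h₂s, h₂p⟩ a b ha hb hab
    set A₁ := (1 : Matrix (Fin d) (Fin d) ℝ) + 2 • B₁ with hA₁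
    set A₂ := (1 : Matrix (Fin d) (Fin d) ℝ) + 2 • B₂ with hA₂
    have hAc : (1 : Matrix (Fin d) (Fin d) ℝ) + 2 • (a • B₁ + b • B₂)
        = a • A₁ + b • A₂ := hmat a b hab B₁ B₂
    have hcp : (a • A₁ + b • A₂).PosDef := posDef_add_smul_aux ha hb hab h₁p h₂p
    set Ec := a • E₁ + b • E₂ with hEc
    set Z := (a • A₁ + b • A₂)⁻¹.mulVec Ec with hZ
    show Ec ⬝ᵥ ((1 : Matrix (Fin d) (Fin d) ℝ) + 2 • (a • B₁ + b • B₂))⁻¹.mulVec Ec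
      ≤ a * (E₁ ⬝ᵥ A₁⁻¹.mulVec E₁) + b * (E₂ ⬝ᵥ A₂⁻¹.mulVec E₂)
    rw [hAc]
    have heq := key_eq hcp Ec
    have hdec : Ec ⬝ᵥ (a • A₁ + b • A₂)⁻¹.mulVec Ec
        = a * (2 * (E₁ ⬝ᵥ Z) - Z ⬝ᵥ A₁.mulVec Z)
          + b * (2 * (E₂ ⬝ᵥ Z) - Z ⬝ᵥ A₂.mulVec Z) := by
      rw [heq, ← hZ]
      have h1 : Ec ⬝ᵥ Z = a * (E₁ ⬝ᵥ Z) + b * (E₂ ⬝ᵥ Z) := by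
        rw [hEc]; simp [add_dotProduct, smul_dotProduct]
      have h2 : Z ⬝ᵥ (a • A₁ + b • A₂).mulVec Z
          = a * (Z ⬝ᵥ A₁.mulVec Z) + b * (Z ⬝ᵥ A₂.mulVec Z) := by
        simp [add_mulVec, smul_mulVec, dotProduct_add, dotProduct_smul]
      rw [h1, h2]; ring
    rw [hdec]
    have k1 := key_ineq h₁p E₁ Z
    have k2 := key_ineq h₂p E₂ Z
    have := mul_le_mul_of_nonneg_left k1 ha
    have := mul_le_mul_of_nonneg_left k2 hb
    linarith
end

section
/- In a finite-dimensional inner product space, let f(Z,M) = (1/2)trace(M) if M ≥ Z⊗Z and +∞ otherwise, defined on ℝ^d × Sym(d). Its Legendre–Fenchel conjugate at (−E, −B) equals (1/2)Eᵀ(I+2B)⁻¹E if I+2B is positive definite, +∞ if I+2B is not positive semidefinite. -/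
open Matrix

section Aux
variable {d : ℕ}

lemma trace_mul_vecMulVec (C : Matrix (Fin d) (Fin d) ℝ) (Z : Fin d → ℝ) :
    (C * vecMulVec Z Z).trace = Z ⬝ᵥ C.mulVec Z := by
  simp only [Matrix.trace, Matrix.diag, Matrix.mul_apply, Matrix.vecMulVec_apply,
    dotProduct, Matrix.mulVec, Finset.mul_sum]
  refine Finset.sum_congr rfl fun i _ => Finset.sum_congr rfl fun j _ => by ring

lemma psd_trace_nonneg {P : Matrix (Fin d) (Fin d) ℝ} (hP : P.PosSemidef) : 0 ≤ P.trace := by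
  apply Finset.sum_nonneg
  intro i _
  simpa [dotProduct, Pi.single_apply, Matrix.mulVec] using hP.dotProduct_mulVec_nonneg (Pi.single i 1)

open scoped MatrixOrder in
lemma trace_mul_psd_nonneg {A P : Matrix (Fin d) (Fin d) ℝ} (hA : A.PosSemidef)
    (hP : P.PosSemidef) : 0 ≤ (A * P).trace := by
  have h1 : (CFC.sqrt A * P * CFC.sqrt A).trace = (A * P).trace := by
    rw [Matrix.trace_mul_cycle, CFC.sqrt_mul_sqrt_self A (Matrix.nonneg_iff_posSemidef.mpr hA)]
  have h2 : ((CFC.sqrt A)ᴴ * P * CFC.sqrt A).PosSemidef := hP.conjTranspose_mul_mul_same (CFC.sqrt A)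
  rw [(Matrix.nonneg_iff_posSemidef.mp (CFC.sqrt_nonneg A)).1] at h2
  rw [← h1]
  exact psd_trace_nonneg h2

lemma dot_symm {A : Matrix (Fin d) (Fin d) ℝ} (hA : Aᵀ = A) (v w : Fin d → ℝ) :
    v ⬝ᵥ A.mulVec w = w ⬝ᵥ A.mulVec v := by
  rw [Matrix.dotProduct_mulVec, ← Matrix.mulVec_transpose, hA, dotProduct_comm]

lemma half_trace_eq (B M : Matrix (Fin d) (Fin d) ℝ) :
    (B * M).trace + (1/2) * M.trace
      = (1/2) * ((((1 : Matrix (Fin d) (Fin d) ℝ) + 2 • B)) * M).trace := by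
  rw [add_mul, one_mul, Matrix.smul_mul, Matrix.trace_add, Matrix.trace_smul]
  simp only [nsmul_eq_mul, Nat.cast_ofNat]
  ring

lemma vecMulVec_isSymm (Z : Fin d → ℝ) : (vecMulVec Z Z).IsSymm := by
  unfold Matrix.IsSymm
  ext i j
  rw [Matrix.transpose_apply, Matrix.vecMulVec_apply, Matrix.vecMulVec_apply, mul_comm]

end Aux

/-- Legendre–Fenchel conjugate of `f(Z,M) = ½ trace M` (on `{M ⪰ Z⊗Z}`, `+∞` elsewhere),
evaluated at `(−E, −B)`: it equals `½ Eᵀ(I+2B)⁻¹E` (attained supremum) when `I+2B ≻ 0`,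
and is `+∞` when `I+2B` is not positive semidefinite. -/
theorem conjugate_of_subsolution_functional
    (d : ℕ) (E : Fin d → ℝ) (B : Matrix (Fin d) (Fin d) ℝ) (hB : B.IsSymm) :
    (((1 : Matrix (Fin d) (Fin d) ℝ) + 2 • B).PosDef →
      IsGreatest
        {x : ℝ | ∃ (Z : Fin d → ℝ) (M : Matrix (Fin d) (Fin d) ℝ),
          M.IsSymm ∧ (M - vecMulVec Z Z).PosSemidef ∧
          x = -(E ⬝ᵥ Z) - (B * M).trace - (1/2) * M.trace}
        ((1/2) * (E ⬝ᵥ ((1 : Matrix (Fin d) (Fin d) ℝ) + 2 • B)⁻¹.mulVec E))) ∧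
    (¬ ((1 : Matrix (Fin d) (Fin d) ℝ) + 2 • B).PosSemidef →
      ¬ BddAbove
        {x : ℝ | ∃ (Z : Fin d → ℝ) (M : Matrix (Fin d) (Fin d) ℝ),
          M.IsSymm ∧ (M - vecMulVec Z Z).PosSemidef ∧
          x = -(E ⬝ᵥ Z) - (B * M).trace - (1/2) * M.trace}) := by
  set A : Matrix (Fin d) (Fin d) ℝ := (1 : Matrix (Fin d) (Fin d) ℝ) + 2 • B with hAdef
  have hAsymm : Aᵀ = A := by
    rw [hAdef, Matrix.transpose_add, Matrix.transpose_one, Matrix.transpose_smul, hB.eq]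
  -- value rewriting: x = -(E⬝Z) - ½ (A*M).trace
  have hval : ∀ (Z : Fin d → ℝ) (M : Matrix (Fin d) (Fin d) ℝ),
      -(E ⬝ᵥ Z) - (B * M).trace - (1/2) * M.trace
        = -(E ⬝ᵥ Z) - (1/2) * (A * M).trace := by
    intro Z M
    have := half_trace_eq B M
    rw [← hAdef] at this
    linarith
  have hquadV : ∀ Z : Fin d → ℝ, (A * vecMulVec Z Z).trace = Z ⬝ᵥ A.mulVec Z :=
    fun Z => trace_mul_vecMulVec A Z
  constructor
  · intro hA
    have hdet : IsUnit A.det := isUnit_iff_ne_zero.mpr hA.det_pos.ne'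
    have hAinv : A * A⁻¹ = 1 := Matrix.mul_nonsing_inv A hdet
    have hAE : A.mulVec (A⁻¹.mulVec E) = E := by
      rw [Matrix.mulVec_mulVec, hAinv, Matrix.one_mulVec]
    constructor
    · -- membership
      refine ⟨-(A⁻¹.mulVec E), vecMulVec (-(A⁻¹.mulVec E)) (-(A⁻¹.mulVec E)),
        vecMulVec_isSymm _, by simpa using Matrix.PosSemidef.zero, ?_⟩
      rw [hval, hquadV]
      have h1 : A.mulVec (-(A⁻¹.mulVec E)) = -E := by rw [Matrix.mulVec_neg, hAE]
      rw [h1]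
      have h2 : E ⬝ᵥ (-(A⁻¹.mulVec E)) = -(E ⬝ᵥ A⁻¹.mulVec E) := by
        simp [dotProduct_neg]
      have h3 : (-(A⁻¹.mulVec E)) ⬝ᵥ (-E) = A⁻¹.mulVec E ⬝ᵥ E := by
        simp
      rw [h2, h3, dotProduct_comm (A⁻¹.mulVec E) E]
      ring
    · -- upper bound
      rintro x ⟨Z, M, hMsymm, hMpsd, rfl⟩
      rw [hval]
      have hAPSD : A.PosSemidef := hA.posSemidef
      have htr : (A * (M - vecMulVec Z Z)).trace = (A * M).trace - Z ⬝ᵥ A.mulVec Z := by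
        rw [Matrix.mul_sub, Matrix.trace_sub, hquadV]
      have h0 : 0 ≤ (A * M).trace - Z ⬝ᵥ A.mulVec Z := by
        rw [← htr]; exact trace_mul_psd_nonneg hAPSD hMpsd
      -- quadratic bound : -(E⬝Z) - ½ Z⬝AZ ≤ ½ E⬝A⁻¹E
      set w : Fin d → ℝ := Z + A⁻¹.mulVec E with hw
      have hpos : 0 ≤ w ⬝ᵥ A.mulVec w := by
        simpa using hAPSD.dotProduct_mulVec_nonneg w
      have hexp : w ⬝ᵥ A.mulVec w
          = Z ⬝ᵥ A.mulVec Z + 2 * (E ⬝ᵥ Z) + E ⬝ᵥ A⁻¹.mulVec E := by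
        rw [hw, Matrix.mulVec_add, hAE, dotProduct_add, add_dotProduct, add_dotProduct]
        have e1 : A⁻¹.mulVec E ⬝ᵥ A.mulVec Z = Z ⬝ᵥ A.mulVec (A⁻¹.mulVec E) :=
          dot_symm hAsymm _ _
        rw [e1, hAE]
        have e2 : Z ⬝ᵥ E = E ⬝ᵥ Z := dotProduct_comm Z E
        have e3 : A⁻¹.mulVec E ⬝ᵥ E = E ⬝ᵥ A⁻¹.mulVec E := dotProduct_comm _ _
        rw [e2, e3]
        ring
      rw [hexp] at hpos
      linarith
  · -- unbounded case
    intro hA hbdd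
    have hAh : A.IsHermitian := by
      rw [Matrix.IsHermitian, Matrix.conjTranspose, hAsymm]
      exact Matrix.ext fun i j => rfl
    rw [Matrix.posSemidef_iff_dotProduct_mulVec] at hA
    push_neg at hA
    obtain ⟨v, hv⟩ := hA hAh
    have hv' : v ⬝ᵥ A.mulVec v < 0 := by simpa using hv
    obtain ⟨U, hU⟩ := hbdd
    set c : ℝ := -(v ⬝ᵥ A.mulVec v) with hc
    have hcpos : 0 < c := by simp [hc]; linarith
    set e : ℝ := E ⬝ᵥ v with he
    set t : ℝ := max 1 ((2/c) * (|e| + |U| + 1)) with ht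
    have ht1 : 1 ≤ t := le_max_left _ _
    have ht0 : 0 ≤ t := by linarith
    have ht2 : (2/c) * (|e| + |U| + 1) ≤ t := le_max_right _ _
    have hmem : (-(t * e) + (1/2) * c * t^2) ∈
        {x : ℝ | ∃ (Z : Fin d → ℝ) (M : Matrix (Fin d) (Fin d) ℝ),
          M.IsSymm ∧ (M - vecMulVec Z Z).PosSemidef ∧
          x = -(E ⬝ᵥ Z) - (B * M).trace - (1/2) * M.trace} := by
      refine ⟨t • v, vecMulVec (t • v) (t • v), vecMulVec_isSymm _,
        by simpa using Matrix.PosSemidef.zero, ?_⟩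
      rw [hval, hquadV]
      have h1 : E ⬝ᵥ (t • v) = t * e := by rw [he, dotProduct_smul]; simp
      have h2 : (t • v) ⬝ᵥ A.mulVec (t • v) = t^2 * (v ⬝ᵥ A.mulVec v) := by
        rw [Matrix.mulVec_smul, dotProduct_smul, smul_dotProduct]
        simp [smul_eq_mul]; ring
      rw [h1, h2, hc]
      ring
    have hle := hU hmem
    -- derive contradiction
    have hhalf : |e| + |U| + 1 ≤ (1/2) * c * t := by
      have := mul_le_mul_of_nonneg_left ht2 (le_of_lt (half_pos hcpos))
      calc |e| + |U| + 1 = (c/2) * ((2/c) * (|e| + |U| + 1)) := by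
            field_simp
        _ ≤ (c/2) * t := mul_le_mul_of_nonneg_left ht2 (by positivity)
        _ = (1/2) * c * t := by ring
    have hstep : -(t * e) + (1/2) * c * t^2 ≥ t * (|U| + 1) := by
      have h1 : -(t * e) ≥ -(t * |e|) := by
        have : e ≤ |e| := le_abs_self e
        nlinarith
      have h2 : (1/2) * c * t^2 = t * ((1/2) * c * t) := by ring
      nlinarith [le_abs_self e, abs_nonneg e]
    have : t * (|U| + 1) ≥ 1 * (|U| + 1) := by
      apply mul_le_mul_of_nonneg_right ht1 (by positivity)
    nlinarith [le_abs_self U, abs_nonneg U]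
end
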